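/- arXiv:1704.01998 — 2 statements merged into one kernel-verified Lean document; each statement's English description precedes it below -/
import Mathlib

section
/- For each ε ∈ {+1, −1}, the following 4×4 matrix identity holds: (1/√2)(I⊗I − ε·i·Z⊗Z) · cZ = e^{−iεπ/4} · (S^ε ⊗ S^ε), where S^{+1} = S = diag(1,i) and S^{−1} = S† = diag(1,−i). Hence applying the residual operator of the Y-basis bridge measurement after the controlled-Z between the bridged neighbours leaves exactly a phase-gate correction S^ε on each neighbour, up to the global phase e^{−iεπ/4}. -/
open Matrix Kronecker Complex

noncomputable section

/-- The 2×2 identity matrix. -/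
def I2 : Matrix (ZMod 2) (ZMod 2) ℂ := 1

/-- The single-qubit Pauli-Z matrix `diag(1, -1)`. -/
def qZ : Matrix (ZMod 2) (ZMod 2) ℂ :=
  Matrix.diagonal (fun b => if b = 0 then 1 else -1)

/-- The phase gate `S = diag(1, i)`. -/
def qS : Matrix (ZMod 2) (ZMod 2) ℂ :=
  Matrix.diagonal (fun b => if b = 0 then 1 else Complex.I)

/-- The two-qubit controlled-Z gate `diag(1,1,1,−1)`, acting as `−1` exactly on
the basis state `|11⟩`. -/
def cZ2 : Matrix (ZMod 2 × ZMod 2) (ZMod 2 × ZMod 2) ℂ :=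
  Matrix.diagonal (fun x => if x.1 = 1 ∧ x.2 = 1 then -1 else 1)

lemma zmod2_cases (x : ZMod 2) : x = 0 ∨ x = 1 := by
  revert x; decide

lemma qS_inv : qS⁻¹ = Matrix.diagonal (fun b => if b = 0 then 1 else -Complex.I) := by
  apply Matrix.inv_eq_right_inv
  rw [qS, Matrix.diagonal_mul_diagonal]
  ext i j
  rcases zmod2_cases i with rfl | rfl <;> rcases zmod2_cases j with rfl | rfl <;> simp [Matrix.diagonal, Matrix.one_apply]

lemma sq2 : (Real.sqrt 2 : ℂ) * (Real.sqrt 2 : ℂ) = 2 := by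
  norm_cast
  exact Real.mul_self_sqrt (by norm_num)

lemma hinv : ((Real.sqrt 2 : ℂ))⁻¹ = (Real.sqrt 2 : ℂ) / 2 := by
  have h2 := sq2
  have : (Real.sqrt 2 : ℂ) ≠ 0 := by
    intro h; rw [h] at h2; norm_num at h2
  field_simp
  linear_combination -h2

lemma exp_pos : Complex.exp (-(1:ℂ) * Complex.I * (Real.pi / 4))
    = ((Real.sqrt 2 : ℂ) / 2) * (1 - Complex.I) := by
  have h : -(1:ℂ) * Complex.I * (Real.pi / 4) = ((-(Real.pi/4) : ℝ) : ℂ) * Complex.I := by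
    push_cast; ring
  rw [h, Complex.exp_mul_I, Complex.ofReal_neg, Complex.cos_neg, Complex.sin_neg,
    ← Complex.ofReal_cos, ← Complex.ofReal_sin,
    Real.cos_pi_div_four, Real.sin_pi_div_four]
  push_cast; ring

lemma exp_neg' : Complex.exp (-(-1:ℂ) * Complex.I * (Real.pi / 4))
    = ((Real.sqrt 2 : ℂ) / 2) * (1 + Complex.I) := by
  have h : -(-1:ℂ) * Complex.I * (Real.pi / 4) = (((Real.pi/4) : ℝ) : ℂ) * Complex.I := by
    push_cast; ring
  rw [h, Complex.exp_mul_I,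
    ← Complex.ofReal_cos, ← Complex.ofReal_sin,
    Real.cos_pi_div_four, Real.sin_pi_div_four]
  push_cast; ring

/-- For `ε ∈ {+1, −1}`:
`(1/√2)(I⊗I − ε·i·Z⊗Z) · cZ = e^{−iεπ/4} · (S^ε ⊗ S^ε)`. -/
theorem stmt_14 (ε : ℤ) (hε : ε = 1 ∨ ε = -1) :
    (((Real.sqrt 2 : ℂ))⁻¹ • (I2 ⊗ₖ I2 - ((ε : ℂ) * Complex.I) • (qZ ⊗ₖ qZ))) * cZ2
      = Complex.exp (-(ε : ℂ) * Complex.I * (Real.pi / 4)) • ((qS ^ ε) ⊗ₖ (qS ^ ε)) := by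
  have h2 := sq2
  rcases hε with rfl | rfl
  · rw [zpow_one]
    push_cast
    rw [exp_pos, hinv]
    ext ⟨i,j⟩ ⟨k,l⟩
    rcases zmod2_cases i with rfl | rfl <;> rcases zmod2_cases j with rfl | rfl <;> rcases zmod2_cases k with rfl | rfl <;> rcases zmod2_cases l with rfl | rfl <;>
      simp [I2, qZ, qS, cZ2, smul_mul_assoc, Matrix.mul_diagonal, Matrix.smul_apply,
        Matrix.sub_apply, Matrix.kroneckerMap_apply, Matrix.one_apply,
        Matrix.diagonal_apply, Prod.ext_iff] <;>
      first
        | decide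
        | exact Or.inl h2.symm
        | ring1
        | linear_combination ((Real.sqrt 2 : ℂ) / 2) * Complex.I_sq
  · rw [Matrix.zpow_neg_one, qS_inv]
    push_cast
    rw [exp_neg', hinv]
    ext ⟨i,j⟩ ⟨k,l⟩
    rcases zmod2_cases i with rfl | rfl <;> rcases zmod2_cases j with rfl | rfl <;> rcases zmod2_cases k with rfl | rfl <;> rcases zmod2_cases l with rfl | rfl <;>
      simp [I2, qZ, cZ2, smul_mul_assoc, Matrix.mul_diagonal, Matrix.smul_apply,
        Matrix.sub_apply, Matrix.kroneckerMap_apply, Matrix.one_apply,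
        Matrix.diagonal_apply, Prod.ext_iff] <;>
      first
        | decide
        | exact Or.inl h2.symm
        | ring1
        | linear_combination ((Real.sqrt 2 : ℂ) / 2) * Complex.I_sq
end
end

section
/- Define the Y-basis bras ⟨y_0| = (1/√2)(⟨0| − i⟨1|) and ⟨y_1| = (1/√2)(⟨0| + i⟨1|), and the Hadamard-basis ancilla states |h_r⟩ = (1/√2)(|0⟩ + (−1)^r|1⟩) for r ∈ {0,1}. For r, s ∈ {0,1}, set ε = (−1)^{r+s}. Then the following identity of linear maps from ℂ^4 to ℂ^4 holds: (I_4 ⊗ ⟨y_s|) ∘ cZ_{a,b} ∘ cZ_{p,b} ∘ (cZ_{a,p} ⊗ |h_r⟩) = (1/√2) · e^{−iεπ/4} · (S^ε ⊗ S^ε), where S^{+1} = diag(1,i) and S^{−1} = diag(1,−i). Thus a bridge qubit prepared in a Hadamard-basis state |h_r⟩, entangled to its two neighbours by controlled-Z gates and measured in the Pauli-Y basis with outcome s, implements the controlled-Z gate cZ_{a,p} between its neighbours up to the local corrections S^{−ε} ⊗ S^{−ε}, a global phase, and normalization 1/√2 (the bridge case of Lemma 3, equation (27)). -/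
open Matrix Kronecker Complex

noncomputable section

/-- The single-qubit computational basis state `|b⟩`. -/
def ketb (b : ZMod 2) : ZMod 2 → ℂ := Pi.single b 1

/-- The Pauli-Y eigenstate `|y_s⟩ = (|0⟩ + (−1)^s i |1⟩)/√2`
(`|y_0⟩ = (|0⟩ + i|1⟩)/√2`, `|y_1⟩ = (|0⟩ − i|1⟩)/√2`). -/
def yket (s : ZMod 2) : ZMod 2 → ℂ :=
  ((Real.sqrt 2 : ℂ))⁻¹ • (ketb 0 + ((-1 : ℂ) ^ s.val * Complex.I) • ketb 1)

/-- The Hadamard-basis state `|h_r⟩ = (1/√2)(|0⟩ + (−1)^r |1⟩)`. -/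
def hket (r : ZMod 2) : ZMod 2 → ℂ :=
  ((Real.sqrt 2 : ℂ))⁻¹ • (ketb 0 + ((-1 : ℂ) ^ r.val) • ketb 1)

/-- Three qubits ordered `a, p, b`: qubits `a, p` form the `ℂ⁴` register and
`b` is the ancilla. `cZ_{a,b}` is the controlled-Z between qubit `a` and `b`. -/
def cZab : Matrix ((ZMod 2 × ZMod 2) × ZMod 2) ((ZMod 2 × ZMod 2) × ZMod 2) ℂ :=
  Matrix.diagonal (fun x => (-1 : ℂ) ^ (x.1.1.val * x.2.val))

/-- `cZ_{p,b}`: the controlled-Z between qubit `p` and the ancilla `b`. -/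
def cZpb : Matrix ((ZMod 2 × ZMod 2) × ZMod 2) ((ZMod 2 × ZMod 2) × ZMod 2) ℂ :=
  Matrix.diagonal (fun x => (-1 : ℂ) ^ (x.1.2.val * x.2.val))

/-- `cZ_{a,p}`: the controlled-Z gate between qubits `a` and `p`. -/
def cZap : Matrix (ZMod 2 × ZMod 2) (ZMod 2 × ZMod 2) ℂ :=
  Matrix.diagonal (fun y => (-1 : ℂ) ^ (y.1.val * y.2.val))

/-- The map `v ↦ v ⊗ |w⟩` adjoining the ancilla `b` in state `w`, as a matrix. -/
def injB (w : ZMod 2 → ℂ) :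
    Matrix ((ZMod 2 × ZMod 2) × ZMod 2) (ZMod 2 × ZMod 2) ℂ :=
  Matrix.of fun x y => (if x.1 = y then 1 else 0) * w x.2

/-- Contraction of the ancilla `b` with the Y-basis bra `⟨y_s|`, as a matrix. -/
def projY (s : ZMod 2) :
    Matrix (ZMod 2 × ZMod 2) ((ZMod 2 × ZMod 2) × ZMod 2) ℂ :=
  Matrix.of fun y x => (if y = x.1 then 1 else 0) * (starRingEnd ℂ) (yket s x.2)

lemma sum_zmod2 {M : Type*} [AddCommMonoid M] (f : ZMod 2 → M) :
    ∑ i, f i = f 0 + f 1 := Fin.sum_univ_two f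

lemma val1 : (1 : ZMod 2).val = 1 := rfl

lemma zf0 (h : 0 < 2) : ((fun i => i) (⟨0, h⟩ : Fin 2) : ZMod 2) = 0 := rfl

lemma zf1 (h : 1 < 2) : ((fun i => i) (⟨1, h⟩ : Fin 2) : ZMod 2) = 1 := rfl

lemma qS_zpow_neg_one :
    qS ^ (-1 : ℤ) = Matrix.diagonal (fun b : ZMod 2 => if b = 0 then 1 else -Complex.I) := by
  rw [Matrix.zpow_neg_one]
  apply Matrix.inv_eq_right_inv
  ext i j
  fin_cases i <;> fin_cases j <;> simp only [zf0, zf1] <;>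
    simp [qS, Matrix.mul_apply, sum_zmod2, Matrix.diagonal, Matrix.one_apply] <;> rfl

lemma exp_quarter_pos :
    Complex.exp (-(((1 : ℤ) : ℂ)) * Complex.I * (Real.pi / 4))
      = (Real.sqrt 2 / 2) * (1 - Complex.I) := by
  have h : (-(((1 : ℤ) : ℂ)) * Complex.I * (Real.pi / 4)) = ((-(Real.pi / 4) : ℂ)) * Complex.I := by
    push_cast; ring
  rw [h, Complex.exp_mul_I, Complex.cos_neg, Complex.sin_neg]
  have h4 : ((Real.pi / 4 : ℝ) : ℂ) = ((Real.pi : ℂ) / 4) := by push_cast; ring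
  rw [← h4, ← Complex.ofReal_cos, ← Complex.ofReal_sin,
    Real.cos_pi_div_four, Real.sin_pi_div_four]
  push_cast; ring

lemma exp_quarter_neg :
    Complex.exp (-(((-1 : ℤ) : ℂ)) * Complex.I * (Real.pi / 4))
      = (Real.sqrt 2 / 2) * (1 + Complex.I) := by
  have h : (-(((-1 : ℤ) : ℂ)) * Complex.I * (Real.pi / 4)) = (((Real.pi / 4 : ℝ) : ℂ)) * Complex.I := by
    push_cast; ring
  rw [h, Complex.exp_mul_I, ← Complex.ofReal_cos, ← Complex.ofReal_sin,
    Real.cos_pi_div_four, Real.sin_pi_div_four]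
  push_cast; ring

set_option maxHeartbeats 4000000 in
/-- Bridge case of Lemma 3: a bridge qubit prepared in `|h_r⟩`, entangled with
its two neighbours by controlled-Z gates and measured in the Pauli-Y basis with
outcome `s`, implements `cZ_{a,p}` up to local `S^ε` corrections, a global
phase `e^{−iεπ/4}` and normalization `1/√2`, where `ε = (−1)^{r+s}`. -/
theorem stmt_17 (r s : ZMod 2) (ε : ℤ) (hε : ε = (-1 : ℤ) ^ (r.val + s.val)) :
    projY s * cZab * cZpb * (injB (hket r) * cZap)
      = (((Real.sqrt 2 : ℂ))⁻¹ * Complex.exp (-(ε : ℂ) * Complex.I * (Real.pi / 4))) •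
          ((qS ^ ε) ⊗ₖ (qS ^ ε)) := by
  have h0 : ((Real.sqrt 2 : ℝ) : ℂ) ≠ 0 := by
    simpa using (Real.sqrt_ne_zero' (x := 2)).mpr (by norm_num)
  have h2 : ((Real.sqrt 2 : ℝ) : ℂ) ^ 2 = 2 := by
    norm_cast; rw [Real.sq_sqrt]; norm_num
  fin_cases r <;> fin_cases s <;>
    [ (have he : ε = 1 := by simpa [val1] using hε);
      (have he : ε = -1 := by rw [hε]; decide);
      (have he : ε = -1 := by rw [hε]; decide);
      (have he : ε = 1 := by simpa [val1] using hε)] <;>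
    subst he <;>
    first
      | rw [zpow_one, exp_quarter_pos]
      | rw [qS_zpow_neg_one, exp_quarter_neg]
  all_goals
    ext i j
    obtain ⟨i1, i2⟩ := i
    obtain ⟨j1, j2⟩ := j
    rw [Matrix.mul_apply]
    simp only [cZab, cZpb, cZap, Matrix.mul_diagonal]
    simp only [Fintype.sum_prod_type, sum_zmod2, projY, injB, hket, yket, ketb, qS,
      Matrix.kroneckerMap_apply, Pi.single_apply, Matrix.smul_apply, Matrix.of_apply,
      Matrix.diagonal_apply, Pi.add_apply, Pi.smul_apply, smul_eq_mul,
      _root_.map_mul, map_add, _root_.map_one, map_pow, map_inv₀, Complex.conj_I,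
      Complex.conj_ofReal, map_neg, val1]
    fin_cases i1 <;> fin_cases i2 <;> fin_cases j1 <;> fin_cases j2 <;> simp only [zf0, zf1] <;>
      norm_num [Prod.ext_iff, val1] <;>
      field_simp <;>
      ring_nf <;>
      simp [h2] <;>
      ring_nf
end
end
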